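/- Let f : ℝⁿ → ℝ be σ-strongly convex with minimizer θ⋆, and let g_i : ℝⁿ → ℝ for i = 1,…,c each be L_i-Lipschitz with g_i(θ⋆) ≤ -ζ. Define ε_crit := (σ/2) · min_i (ζ/L_i)². Then any θ with |f(θ) - f(θ⋆)| ≤ ε_crit satisfies g_i(θ) ≤ 0 for all i. -/

import Mathlib

/-- Proposition 1 of the paper: with `f` `σ`-strongly convex with minimizer `θ⋆` and
constraints `g i` each `L i`-Lipschitz with margin `g i θ⋆ ≤ -ζ`, any `θ` with
`|f θ - f θ⋆| ≤ ε_crit := (σ/2) · min_i (ζ / L i)²` satisfies `g i θ ≤ 0` for all `i`. -/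
theorem eps_crit_screening
    {n : ℕ} {ι : Type*} [Fintype ι] [Nonempty ι]
    (f : EuclideanSpace ℝ (Fin n) → ℝ) (g : ι → EuclideanSpace ℝ (Fin n) → ℝ)
    (σ ζ : ℝ) (L : ι → ℝ)
    (hσ : 0 < σ) (hζ : 0 < ζ) (hL : ∀ i, 0 < L i)
    (hsc : ConvexOn ℝ Set.univ (fun θ => f θ - (σ / 2) * ‖θ‖ ^ 2))
    (θstar : EuclideanSpace ℝ (Fin n)) (hmin : ∀ θ, f θstar ≤ f θ)
    (hLip : ∀ i, ∀ x y, |g i x - g i y| ≤ L i * ‖x - y‖)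
    (hfeas : ∀ i, g i θstar ≤ -ζ)
    (θ : EuclideanSpace ℝ (Fin n))
    (hθ : |f θ - f θstar| ≤ (σ / 2) * ⨅ i, (ζ / L i) ^ 2) :
    ∀ i, g i θ ≤ 0 := by
  have hsc' : StrongConvexOn Set.univ σ f := by
    rw [strongConvexOn_iff_convex]
    exact hsc
  -- quadratic growth
  have key : ∀ t ∈ Set.Ioo (0:ℝ) 1,
      σ / 2 * (1 - t) * ‖θ - θstar‖ ^ 2 ≤ f θ - f θstar := by
    intro t ht
    have h := hsc'.2 (Set.mem_univ θ) (Set.mem_univ θstar) ht.1.le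
      (by linarith [ht.2] : (0:ℝ) ≤ 1 - t) (by ring)
    have hm := hmin (t • θ + (1 - t) • θstar)
    simp only [smul_eq_mul] at h
    nlinarith [h, hm, sq_nonneg ‖θ - θstar‖, ht.1]
  have grow : σ / 2 * ‖θ - θstar‖ ^ 2 ≤ f θ - f θstar := by
    have htend : Filter.Tendsto (fun t : ℝ => σ / 2 * (1 - t) * ‖θ - θstar‖ ^ 2)
        (nhdsWithin 0 (Set.Ioi 0)) (nhds (σ / 2 * ‖θ - θstar‖ ^ 2)) := by
      have : Filter.Tendsto (fun t : ℝ => σ / 2 * (1 - t) * ‖θ - θstar‖ ^ 2)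
          (nhds 0) (nhds (σ / 2 * (1 - 0) * ‖θ - θstar‖ ^ 2)) :=
        ((continuous_const.mul (continuous_const.sub continuous_id)).mul
          continuous_const).tendsto 0
      simpa using this.mono_left nhdsWithin_le_nhds
    refine le_of_tendsto htend ?_
    filter_upwards [Ioo_mem_nhdsGT_of_mem (by norm_num : (0:ℝ) ∈ Set.Ico (0:ℝ) 1)]
      with t ht using key t ht
  intro i
  have hinf : (⨅ j, (ζ / L j) ^ 2) ≤ (ζ / L i) ^ 2 :=
    ciInf_le (Finite.bddBelow_range _) i
  have h1 : |f θ - f θstar| = f θ - f θstar := abs_of_nonneg (by linarith [hmin θ])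
  have h2 : σ / 2 * ‖θ - θstar‖ ^ 2 ≤ σ / 2 * (ζ / L i) ^ 2 := by
    calc σ / 2 * ‖θ - θstar‖ ^ 2 ≤ f θ - f θstar := grow
      _ ≤ σ / 2 * ⨅ j, (ζ / L j) ^ 2 := by rw [← h1]; exact hθ
      _ ≤ σ / 2 * (ζ / L i) ^ 2 := by
          exact mul_le_mul_of_nonneg_left hinf (by positivity)
  have h3 : ‖θ - θstar‖ ≤ ζ / L i := by
    have hsq : ‖θ - θstar‖ ^ 2 ≤ (ζ / L i) ^ 2 := by
      have := (mul_le_mul_iff_right₀ (by positivity : (0:ℝ) < σ / 2)).mp h2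
      exact this
    nlinarith [norm_nonneg (θ - θstar), div_pos hζ (hL i)]
  have hlip := hLip i θ θstar
  have : g i θ - g i θstar ≤ L i * ‖θ - θstar‖ := (le_abs_self _).trans hlip
  have : g i θ ≤ -ζ + L i * (ζ / L i) := by
    have hLn := (hL i).le
    nlinarith [hfeas i, mul_le_mul_of_nonneg_left h3 hLn]
  have : L i * (ζ / L i) = ζ := mul_div_cancel₀ ζ (hL i).ne'
  linarith [‹g i θ ≤ -ζ + L i * (ζ / L i)›, this.le, this.ge]
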